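/- For 3 ≤ n ≤ ∞, the digraph ℤ(Θ_n, k) is k-arc-transitive but not (k+1)-arc-transitive. Specifically, any automorphism fixing the k-arc (0;0,…,0), (1;0,…,0), …, (k;0,…,0) pointwise must also fix both out-neighbours (k+1;0,0,…,0) and (k+1;1,0,…,0) of its terminal vertex. -/

import Mathlib

/-- Arc relation of the digraph `ℤ(Δ,k)`: vertex set `ℤ × V^k` (coordinates
indexed by `ZMod k`), with `((i; v), (i+1; w))` an arc iff `v j = w j` for all
`j ≢ i (mod k)` and `(v j, w j)` an arc of `Δ` for `j ≡ i (mod k)`. -/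
def ZArc {V : Type*} (E : V → V → Prop) (k : ℕ) [NeZero k]
    (u v : ℤ × (ZMod k → V)) : Prop :=
  v.1 = u.1 + 1 ∧ ∀ j : ZMod k,
    ((u.1 : ZMod k) ≠ j → u.2 j = v.2 j) ∧
    ((u.1 : ZMod k) = j → E (u.2 j) (v.2 j))

/-- `f` is an automorphism of the digraph with arc relation `E`. -/
def IsAut {α : Type*} (E : α → α → Prop) (f : α ≃ α) : Prop :=
  ∀ u v, E u v ↔ E (f u) (f v)

/-- `γ` is a `k`-arc of the digraph with arc relation `E`. -/
def IsKArc {α : Type*} (E : α → α → Prop) (k : ℕ) (γ : Fin (k+1) → α) : Prop :=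
  ∀ i : Fin k, E (γ i.castSucc) (γ i.succ)

/-- The automorphism group acts transitively on `k`-arcs. -/
def KArcTransitive {α : Type*} (E : α → α → Prop) (k : ℕ) : Prop :=
  ∀ γ₁ γ₂ : Fin (k+1) → α, IsKArc E k γ₁ → IsKArc E k γ₂ →
    ∃ f : α ≃ α, IsAut E f ∧ ∀ m, f (γ₁ m) = γ₂ m

/-- Arc relation of `Θ_n`: directed cycle on `ℤ_n` (for `n = 0` this is
`ZMod 0 = ℤ`, i.e. `Θ_∞`, the directed line) with a loop at every vertex. -/
def ThetaArc (n : ℕ) (x y : ZMod n) : Prop := y = x + 1 ∨ y = x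

/-- For `3 ≤ n ≤ ∞` (here `n = 0` encodes `n = ∞` via `ZMod 0 = ℤ`), the
digraph `ℤ(Θ_n, k)` is `k`-arc-transitive but not `(k+1)`-arc-transitive;
specifically, every automorphism fixing the `k`-arc
`(0;0,…,0), (1;0,…,0), …, (k;0,…,0)` pointwise also fixes both out-neighbours
`(k+1; 0,0,…,0)` and `(k+1; 1,0,…,0)` of its terminal vertex. -/

lemma ediv_jump (k : ℕ) (hk : 0 < k) (x : ℤ) :
    (x+1) / (k:ℤ) = x / k + if ((k:ℤ) ∣ (x+1)) then 1 else 0 := by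
  have hk' : (k:ℤ) ≠ 0 := by exact_mod_cast hk.ne'
  have hmod := Int.mul_ediv_add_emod (x+1) k
  have h0 : 0 ≤ (x+1) % k := Int.emod_nonneg _ hk'
  have h1 : (x+1) % k < k := Int.emod_lt_of_pos _ (by exact_mod_cast hk)
  by_cases hd : (k:ℤ) ∣ (x+1)
  · rw [if_pos hd]
    have hr : (x+1) % k = 0 := Int.emod_eq_zero_of_dvd hd
    rw [hr, add_zero] at hmod
    have hx : x = ((k:ℤ)-1) + ((x+1)/k - 1) * k := by linear_combination -hmod
    have h2 : x / (k:ℤ) = (x+1)/k - 1 := by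
      conv_lhs => rw [hx]
      rw [Int.add_mul_ediv_right _ _ hk',
        Int.ediv_eq_zero_of_lt (a := (k:ℤ)-1) (by omega) (by omega)]
      ring
    omega
  · rw [if_neg hd, add_zero]
    have hr : (x+1) % k ≠ 0 := fun h => hd (Int.dvd_of_emod_eq_zero h)
    have hx : x = ((x+1) % k - 1) + ((x+1)/k) * k := by linear_combination -hmod
    have h2 : x / (k:ℤ) = (x+1)/k := by
      conv_lhs => rw [hx]
      rw [Int.add_mul_ediv_right _ _ hk',
        Int.ediv_eq_zero_of_lt (a := (x+1) % k - 1) (by omega) (by omega)]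
      ring
    omega

/-- number of update-steps of coordinate `l` before time `i` (normalized). -/
def epoch (k : ℕ) (l : ZMod k) (i : ℤ) : ℤ := (i + ((k:ℤ) - 1 - l.val)) / k

lemma epoch_succ (k : ℕ) [NeZero k] (l : ZMod k) (i : ℤ) :
    epoch k l (i+1) = epoch k l i + (if ((i : ZMod k) = l) then 1 else 0) := by
  have hk : 0 < k := Nat.pos_of_ne_zero (NeZero.ne k)
  have h := ediv_jump k hk (i + ((k:ℤ) - 1 - l.val))
  have harg : i + 1 + ((k:ℤ) - 1 - l.val) = (i + ((k:ℤ) - 1 - l.val)) + 1 := by ring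
  have hcond : ((k:ℤ) ∣ (i + ((k:ℤ) - 1 - l.val) + 1)) ↔ ((i : ZMod k) = l) := by
    have h1 : i + ((k:ℤ) - 1 - l.val) + 1 = (i - l.val) + k := by ring
    rw [h1, dvd_add_self_right]
    rw [← ZMod.intCast_zmod_eq_zero_iff_dvd]
    push_cast
    rw [sub_eq_zero, ZMod.natCast_rightInverse l]
  rw [epoch, epoch, harg, h, if_congr hcond rfl rfl]

lemma theta_shift (n : ℕ) (c x y : ZMod n) :
    ThetaArc n (c+x) (c+y) ↔ ThetaArc n x y := by
  simp [ThetaArc, add_assoc]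

lemma theta_reflect (n : ℕ) (c x y : ZMod n) :
    ThetaArc n (c - x) (c + 1 - y) ↔ ThetaArc n x y := by
  unfold ThetaArc
  constructor
  · rintro (h | h)
    · right; linear_combination -h
    · left; linear_combination -h
  · rintro (h | h)
    · right; linear_combination -h
    · left; linear_combination -h

/-- coordinate transformation used in automorphisms. -/
def G (n : ℕ) (s : Bool) (cl : ZMod n) (E : ℤ) (x : ZMod n) : ZMod n :=
  if s then cl + (E : ZMod n) - x else cl + x

def Ginv (n : ℕ) (s : Bool) (cl : ZMod n) (E : ℤ) (y : ZMod n) : ZMod n :=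
  if s then cl + (E : ZMod n) - y else y - cl

@[simp] lemma Ginv_G (n : ℕ) (s : Bool) (cl : ZMod n) (E : ℤ) (x : ZMod n) :
    Ginv n s cl E (G n s cl E x) = x := by cases s <;> simp [G, Ginv]

@[simp] lemma G_Ginv (n : ℕ) (s : Bool) (cl : ZMod n) (E : ℤ) (y : ZMod n) :
    G n s cl E (Ginv n s cl E y) = y := by cases s <;> simp [G, Ginv]

lemma G_inj (n : ℕ) (s : Bool) (cl : ZMod n) (E : ℤ) {x y : ZMod n} :
    G n s cl E x = G n s cl E y ↔ x = y := by
  constructor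
  · intro h; have := congrArg (Ginv n s cl E) h; simpa using this
  · intro h; rw [h]

lemma G_theta (n : ℕ) (s : Bool) (cl : ZMod n) (E : ℤ) (x y : ZMod n) :
    ThetaArc n (G n s cl E x) (G n s cl (E+1) y) ↔ ThetaArc n x y := by
  cases s
  · simp only [G, Bool.false_eq_true, if_false]
    exact theta_shift n cl x y
  · simp only [G, if_true]
    have h1 : cl + ((E:ℤ) : ZMod n) - x = (cl + E) - x := rfl
    have h2 : cl + (((E+1):ℤ) : ZMod n) - y = (cl + E) + 1 - y := by push_cast; ring
    rw [h1, h2]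
    exact theta_reflect n (cl + E) x y

/-- the general automorphism of `ℤ(Θ_n, k)`. -/
def autE (n k : ℕ) [NeZero k] (a : ℤ) (s : ZMod k → Bool) (c : ZMod k → ZMod n) :
    (ℤ × (ZMod k → ZMod n)) ≃ (ℤ × (ZMod k → ZMod n)) where
  toFun p := (p.1 + a, fun l => G n (s l) (c l) (epoch k l (p.1 + a)) (p.2 (l - (a : ZMod k))))
  invFun p := (p.1 - a, fun j =>
    Ginv n (s (j + (a : ZMod k))) (c (j + (a : ZMod k))) (epoch k (j + (a : ZMod k)) p.1)
      (p.2 (j + (a : ZMod k))))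
  left_inv := by
    rintro ⟨i, u⟩
    refine Prod.ext (by simp) ?_
    funext j
    simp
  right_inv := by
    rintro ⟨i, w⟩
    refine Prod.ext (by simp) ?_
    funext l
    simp

lemma autE_isAut (n k : ℕ) [NeZero k] (a : ℤ) (s : ZMod k → Bool) (c : ZMod k → ZMod n) :
    IsAut (ZArc (ThetaArc n) k) (autE n k a s c) := by
  rintro ⟨i, u⟩ ⟨i', w⟩
  simp only [ZArc, autE, Equiv.coe_fn_mk]
  constructor
  · rintro ⟨h1, h2⟩
    subst h1
    refine ⟨by ring, fun l => ?_⟩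
    obtain ⟨e1, e2⟩ := h2 (l - (a : ZMod k))
    have hcond : (((i + a : ℤ) : ZMod k) = l) ↔ ((i : ZMod k) = l - (a : ZMod k)) := by
      push_cast
      rw [eq_sub_iff_add_eq]
    have hep : epoch k l (i + 1 + a) =
        epoch k l (i + a) + (if (((i + a : ℤ) : ZMod k) = l) then 1 else 0) := by
      rw [show i + 1 + a = (i + a) + 1 by ring, epoch_succ]
    constructor
    · intro hne
      rw [hep, if_neg hne, add_zero, G_inj]
      exact e1 (fun h => hne (hcond.mpr h))
    · intro heq
      rw [hep, if_pos heq, G_theta]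
      exact e2 (hcond.mp heq)
  · rintro ⟨h1, h2⟩
    have h1' : i' = i + 1 := by omega
    subst h1'
    refine ⟨rfl, fun j => ?_⟩
    obtain ⟨e1, e2⟩ := h2 (j + (a : ZMod k))
    rw [add_sub_cancel_right] at e1 e2
    have hcond : (((i + a : ℤ) : ZMod k) = j + (a : ZMod k)) ↔ ((i : ZMod k) = j) := by
      push_cast
      rw [add_left_inj]
    have hep : epoch k (j + (a:ZMod k)) (i + 1 + a) =
        epoch k (j + (a:ZMod k)) (i + a) +
          (if (((i + a : ℤ) : ZMod k) = j + (a:ZMod k)) then 1 else 0) := by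
      rw [show i + 1 + a = (i + a) + 1 by ring, epoch_succ]
    constructor
    · intro hne
      have hne' : ¬ (((i + a : ℤ) : ZMod k) = j + (a : ZMod k)) := fun h => hne (hcond.mp h)
      rw [hep, if_neg hne', add_zero, G_inj] at e1
      exact e1 hne'
    · intro heq
      have heq' : (((i + a : ℤ) : ZMod k) = j + (a : ZMod k)) := hcond.mpr heq
      rw [hep, if_pos heq', G_theta] at e2
      exact e2 heq'


section Part1
variable (n k : ℕ) [NeZero k]

lemma gcongr' {K : ℕ} {β : Type*} (γ : Fin (K+1) → β) {a b : ℕ} (ha : a < K+1) (hb : b < K+1)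
    (hab : a = b) : γ ⟨a, ha⟩ = γ ⟨b, hb⟩ := by subst hab; rfl

lemma arc_fst {K : ℕ} (γ : Fin (K+1) → ℤ × (ZMod k → ZMod n))
    (h : IsKArc (ZArc (ThetaArc n) k) K γ) :
    ∀ (m : ℕ) (hm : m < K + 1), (γ ⟨m, hm⟩).1 = (γ 0).1 + m := by
  intro m
  induction m with
  | zero => intro hm; rw [Fin.mk_zero]; simp
  | succ m ih =>
    intro hm
    obtain ⟨h1, -⟩ := h ⟨m, by omega⟩
    rw [Fin.castSucc_mk, Fin.succ_mk] at h1
    rw [h1, ih (by omega)]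
    push_cast
    ring

lemma cast_eq_iff (t : ℕ) (ht : t < k) (l : ZMod k) : ((t : ℕ) : ZMod k) = l ↔ t = l.val := by
  constructor
  · intro h; rw [← h, ZMod.val_cast_of_lt ht]
  · intro h; rw [h, ZMod.natCast_rightInverse l]

lemma arc_const {K : ℕ} (γ : Fin (K+1) → ℤ × (ZMod k → ZMod n))
    (h : IsKArc (ZArc (ThetaArc n) k) K γ) (j : ZMod k) (m : ℕ) :
    ∀ (d : ℕ) (hm : m + d < K + 1),
      (∀ t, m ≤ t → t < m + d → ¬ ((((γ 0).1 + t : ℤ) : ZMod k) = j)) →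
      (γ ⟨m + d, hm⟩).2 j = (γ ⟨m, by omega⟩).2 j := by
  intro d
  induction d with
  | zero => intro hm _; rfl
  | succ d ih =>
    intro hm hno
    obtain ⟨-, h2⟩ := h ⟨m + d, by omega⟩
    rw [Fin.castSucc_mk, Fin.succ_mk] at h2
    obtain ⟨e1, -⟩ := h2 j
    rw [arc_fst n k γ h (m+d) (by omega)] at e1
    have key : (γ ⟨m + d, by omega⟩).2 j = (γ ⟨m + d + 1, by omega⟩).2 j := by
      apply e1
      intro hcontra
      exact hno (m+d) (by omega) (by omega) (by exact_mod_cast hcontra)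
    exact key.symm.trans (ih (by omega) (fun t h1 h2 => hno t h1 (by omega)))

lemma epoch_val (l : ZMod k) :
    ∀ m : ℕ, m ≤ k → epoch k l (m : ℤ) = epoch k l 0 + (if l.val < m then 1 else 0) := by
  intro m
  induction m with
  | zero => intro _; simp
  | succ m ih =>
    intro hm
    have h1 : ((m : ℤ) : ZMod k) = l ↔ m = l.val := by
      rw [Int.cast_natCast]; exact cast_eq_iff k m (by omega) l
    rw [show ((m+1 : ℕ) : ℤ) = (m : ℤ) + 1 by push_cast; ring, epoch_succ, ih (by omega)]
    by_cases hcc : m = l.val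
    · rw [if_pos (h1.mpr hcc)]
      split_ifs <;> omega
    · rw [if_neg (fun hh => hcc (h1.mp hh))]
      split_ifs <;> omega

lemma to_std (γ : Fin (k+1) → ℤ × (ZMod k → ZMod n))
    (h : IsKArc (ZArc (ThetaArc n) k) k γ) :
    ∃ f : (ℤ × (ZMod k → ZMod n)) ≃ (ℤ × (ZMod k → ZMod n)),
      IsAut (ZArc (ThetaArc n) k) f ∧ ∀ m : Fin (k+1), f (γ m) = ((m.val : ℤ), fun _ => 0) := by
  classical
  set i₀ : ℤ := (γ 0).1 with hi₀
  set X : ZMod k → ZMod n := fun l => (γ 0).2 (l + (i₀ : ZMod k)) with hX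
  set Y : ZMod k → ZMod n := fun l => (γ (Fin.last k)).2 (l + (i₀ : ZMod k)) with hY
  set s : ZMod k → Bool := fun l => decide (Y l = X l + 1) with hs
  set c : ZMod k → ZMod n := fun l =>
    if Y l = X l + 1 then X l - ((epoch k l 0 : ℤ) : ZMod n) else - X l with hc
  have hk : 0 < k := Nat.pos_of_ne_zero (NeZero.ne k)
  have hcast : ∀ (t : ℕ) (l : ZMod k), t < k →
      (((i₀ + t : ℤ) : ZMod k) = l + (i₀ : ZMod k) ↔ t = l.val) := by
    intro t l ht
    push_cast
    rw [add_comm (i₀ : ZMod k) (t : ZMod k), add_left_inj]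
    exact cast_eq_iff k t ht l
  have F1 : ∀ (l : ZMod k) (m : ℕ) (hm : m < k + 1), m ≤ l.val →
      (γ ⟨m, hm⟩).2 (l + (i₀ : ZMod k)) = X l := by
    intro l m hm hml
    have hlv := l.val_lt
    have h0 := arc_const n k γ h (l + (i₀ : ZMod k)) 0 m (by omega) ?_
    · rw [gcongr' γ (by omega) hm (Nat.zero_add m), Fin.mk_zero] at h0
      exact h0
    · intro t h1 h2 hcontra
      have := (hcast t l (by omega)).mp hcontra
      omega
  have F3 : ∀ (l : ZMod k) (m : ℕ) (hm : m < k + 1), l.val < m →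
      (γ ⟨m, hm⟩).2 (l + (i₀ : ZMod k)) = Y l := by
    intro l m hm hml
    have h0 := arc_const n k γ h (l + (i₀ : ZMod k)) m (k - m) (by omega) ?_
    · rw [gcongr' γ (by omega) (by omega) (show m + (k - m) = k by omega)] at h0
      rw [show (⟨k, by omega⟩ : Fin (k+1)) = Fin.last k from rfl] at h0
      exact h0.symm
    · intro t h1 h2 hcontra
      have := (hcast t l (by omega)).mp hcontra
      omega
  have F2 : ∀ l : ZMod k, ThetaArc n (X l) (Y l) := by
    intro l
    have hlv := l.val_lt
    obtain ⟨-, h2⟩ := h ⟨l.val, hlv⟩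
    rw [Fin.castSucc_mk, Fin.succ_mk] at h2
    obtain ⟨-, e2⟩ := h2 (l + (i₀ : ZMod k))
    rw [arc_fst n k γ h l.val (by omega)] at e2
    have := e2 (by exact_mod_cast (hcast l.val l hlv).mpr rfl)
    rw [F1 l l.val (by omega) le_rfl, F3 l (l.val + 1) (by omega) (by omega)] at this
    exact this
  refine ⟨autE n k (-i₀) s c, autE_isAut n k (-i₀) s c, ?_⟩
  intro m
  have hfst : (γ m).1 = i₀ + m.val := by
    have h0 := arc_fst n k γ h m.val m.isLt
    rwa [Fin.eta] at h0
  show ((γ m).1 + (-i₀), _) = _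
  refine Prod.ext (by rw [hfst]; push_cast; ring) ?_
  funext l
  show G n (s l) (c l) (epoch k l ((γ m).1 + (-i₀))) ((γ m).2 (l - ((-i₀ : ℤ) : ZMod k))) = 0
  have hl : l - ((-i₀ : ℤ) : ZMod k) = l + (i₀ : ZMod k) := by push_cast; ring
  have hep : (γ m).1 + (-i₀) = (m.val : ℤ) := by rw [hfst]; ring
  rw [hl, hep, epoch_val k l m.val (by omega)]
  have hv : (γ m).2 (l + (i₀ : ZMod k)) = if m.val ≤ l.val then X l else Y l := by
    split_ifs with hc1
    · rw [← Fin.eta m m.isLt]; exact F1 l m.val m.isLt hc1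
    · rw [← Fin.eta m m.isLt]; exact F3 l m.val m.isLt (by omega)
  rw [hv]
  by_cases hY1 : Y l = X l + 1
  · have hsl : s l = true := by simp [hs, hY1]
    have hcl : c l = X l - ((epoch k l 0 : ℤ) : ZMod n) := by rw [hc]; simp [hY1]
    rw [G, hsl, if_pos rfl, hcl]
    by_cases hm1 : m.val ≤ l.val
    · rw [if_pos hm1, if_neg (by omega), add_zero]
      ring
    · rw [if_neg hm1, if_pos (by omega), hY1]
      push_cast
      ring
  · have hY2 : Y l = X l := by
      rcases F2 l with h' | h'
      · exact absurd h' hY1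
      · exact h'
    have hsl : s l = false := by simp [hs, hY1]
    have hcl : c l = - X l := by rw [hc]; simp [hY1]
    rw [G, hsl, hcl]
    simp only [Bool.false_eq_true, if_false]
    split_ifs with hm1
    · ring
    · rw [hY2]; ring

lemma IsAut.symm' {α : Type*} {E : α → α → Prop} {f : α ≃ α} (h : IsAut E f) :
    IsAut E f.symm := by
  intro u v
  simpa using (h (f.symm u) (f.symm v)).symm

lemma IsAut.trans' {α : Type*} {E : α → α → Prop} {f g : α ≃ α}
    (h1 : IsAut E f) (h2 : IsAut E g) : IsAut E (f.trans g) :=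
  fun u v => (h1 u v).trans (h2 (f u) (f v))

lemma part1 : KArcTransitive (ZArc (ThetaArc n) k) k := by
  intro γ₁ γ₂ h₁ h₂
  obtain ⟨f₁, hf₁, he₁⟩ := to_std n k γ₁ h₁
  obtain ⟨f₂, hf₂, he₂⟩ := to_std n k γ₂ h₂
  refine ⟨f₁.trans f₂.symm, hf₁.trans' hf₂.symm', fun m => ?_⟩
  rw [Equiv.trans_apply, he₁ m, ← he₂ m, Equiv.symm_apply_apply]

end Part1
section Part23
variable (n k : ℕ) [NeZero k]

/-- the vector `(1,0,…,0)`. -/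
def dlt : ZMod k → ZMod n := fun j => if j = 0 then 1 else 0

lemma thm_one_ne_zero (hn : n = 0 ∨ 3 ≤ n) : (1 : ZMod n) ≠ 0 := by
  intro h
  have : (n:ℕ) ∣ 1 := by
    have := (ZMod.natCast_eq_zero_iff 1 n).mp (by exact_mod_cast h)
    exact this
  rcases hn with rfl | h3
  · simpa using this
  · have := Nat.le_of_dvd one_pos this; omega

lemma thm_two_ne_zero (hn : n = 0 ∨ 3 ≤ n) : (2 : ZMod n) ≠ 0 := by
  intro h
  have hd : (n:ℕ) ∣ 2 := by
    have := (ZMod.natCast_eq_zero_iff 2 n).mp (by exact_mod_cast h)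
    exact this
  rcases hn with rfl | h3
  · simpa using hd
  · have := Nat.le_of_dvd two_pos hd; omega

lemma castk : (((k:ℕ) : ℤ) : ZMod k) = 0 := by push_cast; exact ZMod.natCast_self k

lemma out_char (hone : (1:ZMod n) ≠ 0) (v : ℤ × (ZMod k → ZMod n))
    (h : ZArc (ThetaArc n) k ((k:ℤ), fun _ => 0) v) :
    v = ((k:ℤ)+1, fun _ => (0:ZMod n)) ∨ v = ((k:ℤ)+1, dlt n k) := by
  obtain ⟨h1, h2⟩ := h
  have hv : ∀ j, j ≠ 0 → v.2 j = 0 := fun j hj =>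
    ((h2 j).1 (by rw [castk]; exact fun h => hj h.symm)).symm
  have h0 := (h2 0).2 (by rw [castk])
  have hveq : v = (v.1, v.2) := rfl
  rcases h0 with h' | h'
  · right
    rw [hveq, h1]
    refine Prod.ext rfl ?_
    funext j
    by_cases hj : j = 0
    · subst hj; rw [h']; simp [dlt]
    · simp only [dlt, if_neg hj]; exact hv j hj
  · left
    rw [hveq, h1]
    refine Prod.ext rfl ?_
    funext j
    by_cases hj : j = 0
    · subst hj; rw [h']
    · exact hv j hj

lemma karc_map {α : Type*} {E : α → α → Prop} {f : α ≃ α} {K : ℕ} {γ : Fin (K+1) → α}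
    (hf : IsAut E f) (hγ : IsKArc E K γ) : IsKArc E K (fun m => f (γ m)) :=
  fun i => (hf _ _).mp (hγ i)

lemma stepcond (t : ℕ) (ht : t < k + 1) (j : ZMod k) :
    (((t:ℕ) : ZMod k) = j) ↔ (t = j.val ∨ (t = k ∧ j = 0)) := by
  have hjv := j.val_lt
  rcases Nat.lt_or_ge t k with h | h
  · rw [cast_eq_iff k t h j]
    constructor
    · exact fun h' => Or.inl h'
    · rintro (h' | ⟨h', -⟩)
      · exact h'
      · omega
  · have ht' : t = k := by omega
    rw [ht', ZMod.natCast_self k]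
    constructor
    · intro h'; right; exact ⟨rfl, h'.symm⟩
      
    · rintro (h' | ⟨-, h'⟩)
      · omega
      · exact h'.symm

lemma walk_unique (hn : n = 0 ∨ 3 ≤ n) (γ : Fin (k+1+1) → ℤ × (ZMod k → ZMod n))
    (hγ : IsKArc (ZArc (ThetaArc n) k) (k+1) γ)
    (h0 : γ 0 = ((0:ℤ), fun _ => 0)) (hl : γ (Fin.last (k+1)) = ((k:ℤ)+1, fun _ => 0)) :
    ∀ m : Fin (k+1+1), γ m = ((m.val : ℤ), fun _ => 0) := by
  have hk : 0 < k := Nat.pos_of_ne_zero (NeZero.ne k)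
  have hfst : ∀ (m : ℕ) (hm : m < k+2), (γ ⟨m, hm⟩).1 = m := by
    intro m hm
    rw [arc_fst n k γ hγ m hm, h0]
    simp
  have hz : ∀ j, (γ 0).2 j = 0 := by rw [h0]; intro j; rfl
  have hcon : ∀ (j : ZMod k) (m d : ℕ) (hm : m + d < k + 2),
      (∀ t, m ≤ t → t < m + d → ¬ (((t : ℤ) : ZMod k) = j)) →
      (γ ⟨m + d, hm⟩).2 j = (γ ⟨m, by omega⟩).2 j := by
    intro j m d hm hno
    refine arc_const n k γ hγ j m d hm (fun t h1 h2 hc => hno t h1 h2 ?_)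
    rw [h0] at hc
    simpa using hc
  have hnocast : ∀ (t : ℕ) (j : ZMod k), t < k + 1 → t ≠ j.val → ¬(t = k ∧ j = 0) →
      ¬ (((t : ℤ) : ZMod k) = j) := by
    intro t j ht h1 h2 hc
    rw [Int.cast_natCast, stepcond k t ht j] at hc
    tauto
  have key : ∀ (j : ZMod k) (m : ℕ) (hm : m < k+2), (γ ⟨m, hm⟩).2 j = 0 := by
    intro j
    have hjv := j.val_lt
    -- c1 : values up to j.val are 0
    have c1 : ∀ (m : ℕ) (hm' : m ≤ j.val), (γ ⟨m, by omega⟩).2 j = 0 := by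
      intro m hm'
      have := hcon j 0 m (by omega) ?_
      · rw [gcongr' γ (by omega) (by omega) (Nat.zero_add m), Fin.mk_zero] at this
        rw [this]; exact hz j
      · intro t ht1 ht2
        exact hnocast t j (by omega) (by omega) (by omega)
    -- the updated value a
    obtain ⟨-, h2⟩ := hγ ⟨j.val, by omega⟩
    rw [Fin.castSucc_mk, Fin.succ_mk] at h2
    have e2 := (h2 j).2
    rw [hfst j.val (by omega)] at e2
    have hth : ThetaArc n 0 ((γ ⟨j.val + 1, by omega⟩).2 j) := by
      have hcc : (((j.val : ℤ)) : ZMod k) = j := by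
        rw [Int.cast_natCast, ZMod.natCast_rightInverse j]
      have := e2 hcc
      rwa [c1 j.val le_rfl] at this
    set a : ZMod n := (γ ⟨j.val + 1, by omega⟩).2 j with ha
    -- c2 : values from j.val+1 up to bound are a
    have c2 : ∀ (m : ℕ) (h1 : j.val + 1 ≤ m) (hm : m < k+2), (m ≤ k ∨ j ≠ 0) →
        (γ ⟨m, hm⟩).2 j = a := by
      intro m h1 hm hor
      have := hcon j (j.val + 1) (m - (j.val+1)) (by omega) ?_
      · rw [gcongr' γ (by omega) hm (by omega)] at this
        exact this
      · intro t ht1 ht2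
        refine hnocast t j (by omega) (by omega) ?_
        rintro ⟨rfl, rfl⟩
        simp at ht1 ht2
        rcases hor with h' | h'
        · omega
        · exact h' rfl
    -- determine a = 0
    have ha0 : a = 0 := by
      by_cases hj0 : j = 0
      · -- step at k
        obtain ⟨-, hk2⟩ := hγ ⟨k, by omega⟩
        rw [Fin.castSucc_mk, Fin.succ_mk] at hk2
        have ek := (hk2 j).2
        rw [hfst k (by omega)] at ek
        have := ek (by rw [castk, hj0])
        have hlast : (γ ⟨k + 1, by omega⟩).2 j = 0 := by
          rw [show (⟨k+1, by omega⟩ : Fin (k+1+1)) = Fin.last (k+1) from rfl, hl]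
        have hka : (γ ⟨k, by omega⟩).2 j = a := by
          refine c2 k (by rw [hj0]; simpa using (show 1 ≤ k from hk)) (by omega) (Or.inl le_rfl)
        rw [hlast, hka] at this
        -- ThetaArc a 0 and ThetaArc 0 a
        rcases hth with h' | h' <;> rcases this with h'' | h''
        · exact absurd (show (2:ZMod n) = 0 by linear_combination -h' - h'') (thm_two_ne_zero n hn)
        · exact absurd (show (1:ZMod n) = 0 by linear_combination -h' - h'') (thm_one_ne_zero n hn)
        · exact absurd (show (1:ZMod n) = 0 by linear_combination -h' - h'') (thm_one_ne_zero n hn)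
        · exact h''.symm
      · have hlast : (γ ⟨k + 1, by omega⟩).2 j = 0 := by
          rw [show (⟨k+1, by omega⟩ : Fin (k+1+1)) = Fin.last (k+1) from rfl, hl]
        rw [← hlast]
        exact (c2 (k+1) (by omega) (by omega) (Or.inr hj0)).symm
    intro m hm
    rcases Nat.lt_or_ge j.val m with h1 | h1
    · by_cases hj0 : j = 0
      · rcases Nat.lt_or_ge m (k+1) with h2 | h2
        · rw [c2 m (by omega) hm (Or.inl (by omega)), ha0]
        · have hm' : m = k + 1 := by omega
          subst hm'
          rw [show (⟨k+1, hm⟩ : Fin (k+1+1)) = Fin.last (k+1) from rfl, hl]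
      · rw [c2 m (by omega) hm (Or.inr hj0), ha0]
    · exact c1 m h1
  intro m
  refine Prod.ext ?_ ?_
  · rw [← Fin.eta m m.isLt]; exact hfst m.val m.isLt
  · funext j
    rw [← Fin.eta m m.isLt]
    exact key j m.val m.isLt

end Part23
section Final
variable (n k : ℕ) [NeZero k]

lemma loop_arc (i : ℤ) (v : ZMod k → ZMod n) : ZArc (ThetaArc n) k (i, v) (i+1, v) :=
  ⟨rfl, fun _ => ⟨fun _ => rfl, fun _ => Or.inr rfl⟩⟩

lemma insert_arc (i : ℤ) (hi : (i : ZMod k) = 0) :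
    ZArc (ThetaArc n) k (i, fun _ => 0) (i+1, dlt n k) := by
  refine ⟨rfl, fun j => ⟨?_, ?_⟩⟩
  · intro hne
    show (0:ZMod n) = dlt n k j
    simp only [dlt]
    rw [if_neg]
    exact fun h => hne (by rw [hi, h])
  · intro heq
    show ThetaArc n 0 (dlt n k j)
    have hj : j = 0 := by rw [← heq, hi]
    simp only [dlt, if_pos hj]
    left
    rw [zero_add]

def w1 : Fin (k+1+1) → ℤ × (ZMod k → ZMod n) :=
  fun m => ((m.val:ℤ), if m.val = 0 then (fun _ => 0) else dlt n k)

def w2 : Fin (k+1+1) → ℤ × (ZMod k → ZMod n) :=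
  fun m => ((m.val:ℤ), if m.val = k+1 then dlt n k else fun _ => 0)

lemma w1_karc : IsKArc (ZArc (ThetaArc n) k) (k+1) (w1 n k) := by
  intro t
  have h1 : w1 n k t.castSucc =
      ((t.val : ℤ), if t.val = 0 then (fun _ => 0) else dlt n k) := by
    simp [w1]
  have h2 : w1 n k t.succ = ((t.val : ℤ) + 1, dlt n k) := by
    simp [w1, Fin.val_succ]
  rw [h1, h2]
  by_cases ht0 : t.val = 0
  · rw [if_pos ht0, ht0]
    push_cast
    exact insert_arc n k 0 (by simp)
  · rw [if_neg ht0]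
    exact loop_arc n k _ _
lemma w2_karc : IsKArc (ZArc (ThetaArc n) k) (k+1) (w2 n k) := by
  intro t
  have htl := t.isLt
  have h1 : w2 n k t.castSucc = ((t.val : ℤ), fun _ => 0) := by
    simp only [w2, Fin.coe_castSucc]
    rw [if_neg (by omega)]
  have h2 : w2 n k t.succ =
      ((t.val : ℤ) + 1, if t.val + 1 = k + 1 then dlt n k else fun _ => 0) := by
    simp only [w2, Fin.val_succ]
    push_cast
    ring_nf
  rw [h1, h2]
  by_cases htk : t.val = k
  · rw [if_pos (by omega), htk]
    exact insert_arc n k (k:ℤ) (castk k)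
  · rw [if_neg (by omega)]
    exact loop_arc n k _ _

lemma w1_last : w1 n k (Fin.last (k+1)) = ((k:ℤ)+1, dlt n k) := by
  show (((k+1:ℕ):ℤ), if (k+1:ℕ) = 0 then (fun _ => (0:ZMod n)) else dlt n k) = _
  rw [if_neg (by omega)]
  refine Prod.ext ?_ rfl
  push_cast; ring

lemma w2_last : w2 n k (Fin.last (k+1)) = ((k:ℤ)+1, dlt n k) := by
  show (((k+1:ℕ):ℤ), if (k+1:ℕ) = k+1 then dlt n k else fun _ => (0:ZMod n)) = _
  rw [if_pos rfl]
  refine Prod.ext ?_ rfl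
  push_cast; ring

lemma w1_ne_w2 (hone : (1:ZMod n) ≠ 0) : w1 n k ≠ w2 n k := by
  intro h
  have hk : 0 < k := Nat.pos_of_ne_zero (NeZero.ne k)
  have := congrFun (congrArg Prod.snd (congrFun h ⟨1, by omega⟩)) 0
  simp only [w1, w2] at this
  rw [if_neg (by omega), if_neg (by omega)] at this
  simp only [dlt, if_pos rfl] at this
  exact hone this

lemma std_karc : IsKArc (ZArc (ThetaArc n) k)
    (k+1) (fun m : Fin (k+1+1) => ((m.val:ℤ), fun _ => (0:ZMod n))) := by
  intro t
  refine ⟨?_, fun j => ⟨fun _ => rfl, fun _ => Or.inr rfl⟩⟩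
  show ((t.succ.val:ℕ):ℤ) = ((t.castSucc.val:ℕ):ℤ) + 1
  simp [Fin.val_succ, Fin.coe_castSucc]

lemma rigid (hn : n = 0 ∨ 3 ≤ n) (f : (ℤ × (ZMod k → ZMod n)) ≃ (ℤ × (ZMod k → ZMod n)))
    (hf : IsAut (ZArc (ThetaArc n) k) f)
    (hfix : ∀ m : Fin (k + 1), f ((m : ℤ), fun _ => 0) = ((m : ℤ), fun _ => 0)) :
    f ((k:ℤ)+1, fun _ => 0) = ((k:ℤ)+1, fun _ => 0) ∧
      f ((k:ℤ)+1, dlt n k) = ((k:ℤ)+1, dlt n k) := by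
  have hone := thm_one_ne_zero n hn
  have hfix0 : f ((0:ℤ), fun _ => (0:ZMod n)) = ((0:ℤ), fun _ => 0) := by
    have := hfix 0
    simpa using this
  have hfixk : f ((k:ℤ), fun _ => (0:ZMod n)) = ((k:ℤ), fun _ => 0) := by
    have := hfix (Fin.last k)
    simpa using this
  have hAB : ((k:ℤ)+1, fun _ => (0:ZMod n)) ≠ ((k:ℤ)+1, dlt n k) := by
    intro h
    have := congrFun (congrArg Prod.snd h) 0
    simp only [dlt, if_pos rfl] at this
    exact hone this.symm
  have harcA : ZArc (ThetaArc n) k ((k:ℤ), fun _ => 0) ((k:ℤ)+1, fun _ => (0:ZMod n)) :=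
    loop_arc n k (k:ℤ) _
  have harcB := insert_arc n k (k:ℤ) (castk k)
  have hfA : f ((k:ℤ)+1, fun _ => (0:ZMod n)) = ((k:ℤ)+1, fun _ => (0:ZMod n)) ∨
      f ((k:ℤ)+1, fun _ => (0:ZMod n)) = ((k:ℤ)+1, dlt n k) := by
    have := (hf _ _).mp harcA
    rw [hfixk] at this
    exact out_char n k hone _ this
  have hfB : f ((k:ℤ)+1, dlt n k) = ((k:ℤ)+1, fun _ => (0:ZMod n)) ∨
      f ((k:ℤ)+1, dlt n k) = ((k:ℤ)+1, dlt n k) := by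
    have := (hf _ _).mp harcB
    rw [hfixk] at this
    exact out_char n k hone _ this
  have hnotswap : f ((k:ℤ)+1, fun _ => (0:ZMod n)) ≠ ((k:ℤ)+1, dlt n k) := by
    intro hswap
    have hsymm : IsAut (ZArc (ThetaArc n) k) f.symm := hf.symm'
    have hs0 : f.symm ((0:ℤ), fun _ => (0:ZMod n)) = ((0:ℤ), fun _ => 0) := by
      rw [Equiv.symm_apply_eq]
      exact hfix0.symm
    have hsB : f.symm ((k:ℤ)+1, dlt n k) = ((k:ℤ)+1, fun _ => (0:ZMod n)) := by
      rw [Equiv.symm_apply_eq]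
      exact hswap.symm
    have hw1s : (fun m => f.symm (w1 n k m)) 0 = ((0:ℤ), fun _ => (0:ZMod n)) := by
      show f.symm (w1 n k 0) = _
      have : w1 n k 0 = ((0:ℤ), fun _ => (0:ZMod n)) := by simp [w1]
      rw [this, hs0]
    have hw2s : (fun m => f.symm (w2 n k m)) 0 = ((0:ℤ), fun _ => (0:ZMod n)) := by
      show f.symm (w2 n k 0) = _
      have : w2 n k 0 = ((0:ℤ), fun _ => (0:ZMod n)) := by
        simp only [w2, Fin.val_zero]
        simp
      rw [this, hs0]
    have hw1l : (fun m => f.symm (w1 n k m)) (Fin.last (k+1)) = ((k:ℤ)+1, fun _ => (0:ZMod n)) := by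
      show f.symm (w1 n k (Fin.last (k+1))) = _
      rw [w1_last, hsB]
    have hw2l : (fun m => f.symm (w2 n k m)) (Fin.last (k+1)) = ((k:ℤ)+1, fun _ => (0:ZMod n)) := by
      show f.symm (w2 n k (Fin.last (k+1))) = _
      rw [w2_last, hsB]
    have hu1 := walk_unique n k hn _ (karc_map hsymm (w1_karc n k)) hw1s hw1l
    have hu2 := walk_unique n k hn _ (karc_map hsymm (w2_karc n k)) hw2s hw2l
    apply w1_ne_w2 n k hone
    funext m
    apply f.symm.injective
    exact (hu1 m).trans (hu2 m).symm
  rcases hfA with h | h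
  · refine ⟨h, ?_⟩
    rcases hfB with h' | h'
    · exact absurd (f.injective (h'.trans h.symm)).symm hAB
    · exact h'
  · exact absurd h hnotswap

lemma part2 (hn : n = 0 ∨ 3 ≤ n) : ¬ KArcTransitive (ZArc (ThetaArc n) k) (k+1) := by
  intro htr
  obtain ⟨f, hf, he⟩ := htr _ _ (std_karc n k) (w2_karc n k)
  have hfix : ∀ m : Fin (k + 1), f ((m : ℤ), fun _ => 0) = ((m : ℤ), fun _ => 0) := by
    intro m
    have := he ⟨m.val, by omega⟩
    simp only [w2] at this
    rw [if_neg (by omega)] at this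
    exact this
  have hA := (rigid n k hn f hf hfix).1
  have hlast := he (Fin.last (k+1))
  rw [w2_last] at hlast
  rw [show (((Fin.last (k+1)).val : ℕ) : ℤ) = (k:ℤ)+1 from by rw [Fin.val_last]; push_cast; ring]
    at hlast
  rw [hA] at hlast
  have := congrFun (congrArg Prod.snd hlast) 0
  simp only [dlt, if_pos rfl] at this
  exact thm_one_ne_zero n hn this.symm

end Final


theorem stmt_13 (n : ℕ) (hn : n = 0 ∨ 3 ≤ n) (k : ℕ) [NeZero k] :
    KArcTransitive (ZArc (ThetaArc n) k) k ∧
    ¬ KArcTransitive (ZArc (ThetaArc n) k) (k + 1) ∧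
    (∀ f : (ℤ × (ZMod k → ZMod n)) ≃ (ℤ × (ZMod k → ZMod n)),
      IsAut (ZArc (ThetaArc n) k) f →
      (∀ m : Fin (k + 1), f ((m : ℤ), fun _ => 0) = ((m : ℤ), fun _ => 0)) →
      f ((k : ℤ) + 1, fun _ => 0) = ((k : ℤ) + 1, fun _ => 0) ∧
      f ((k : ℤ) + 1, fun j : ZMod k => if j = 0 then 1 else 0)
        = ((k : ℤ) + 1, fun j : ZMod k => if j = 0 then 1 else 0)) :=
  ⟨part1 n k, part2 n k hn, fun f hf hfix => rigid n k hn f hf hfix⟩
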